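/- Let X_1, ..., X_{2n} be bounded random variables with |X_k| ≤ c_k, such that the conditional expectation of each X_k given all the others is at most α_k. Then for any t > 0, P(Σ X_k ≥ Σ α_k + t) ≤ exp(−t² / (2 Σ c_k²)) (an Azuma–Hoeffding type bound applied via the Doob martingale of partial conditional expectations). -/

import Mathlib

open MeasureTheory

open Real

lemma hoeffding_scalar {p q : ℝ} (hp : 0 ≤ p) (hq : 0 ≤ q) (hpq : p + q = 1)
    {u : ℝ} (hu : 0 ≤ u) :
    p * exp u + q * exp (-u) ≤ exp ((p - q) * u + u ^ 2 / 2) := by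
  set D : ℝ → ℝ := fun v => p * exp v + q * exp (-v) with hD_def
  have hDpos : ∀ v, 0 < D v := by
    intro v
    rcases eq_or_lt_of_le hp with h | h
    · have hq1 : q = 1 := by linarith
      simp [hD_def, ← h, hq1, exp_pos]
    · have := mul_pos h (exp_pos v)
      have := mul_nonneg hq (exp_pos (-v)).le
      simp only [hD_def]; linarith
  set D' : ℝ → ℝ := fun v => p * exp v - q * exp (-v) with hD'_def
  have hD : ∀ v, HasDerivAt D (D' v) v := by
    intro v
    have h1 : HasDerivAt (fun v : ℝ => p * exp v) (p * exp v) v :=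
      (Real.hasDerivAt_exp v).const_mul p
    have h2 : HasDerivAt (fun v : ℝ => q * exp (-v)) (q * (exp (-v) * (-1))) v :=
      ((hasDerivAt_neg v).exp).const_mul q
    have := h1.add h2
    exact this.congr_deriv (by simp only [hD'_def]; ring)
  have hD' : ∀ v, HasDerivAt D' (D v) v := by
    intro v
    have h1 : HasDerivAt (fun v : ℝ => p * exp v) (p * exp v) v :=
      (Real.hasDerivAt_exp v).const_mul p
    have h2 : HasDerivAt (fun v : ℝ => q * exp (-v)) (q * (exp (-v) * (-1))) v :=
      ((hasDerivAt_neg v).exp).const_mul q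
    have := h1.sub h2
    exact this.congr_deriv (by simp only [hD_def]; ring)
  set g : ℝ → ℝ := fun v => (p - q) * v + v ^ 2 / 2 - Real.log (D v) with hg_def
  set g' : ℝ → ℝ := fun v => (p - q) + v - D' v / D v with hg'_def
  have hg : ∀ v, HasDerivAt g (g' v) v := by
    intro v
    have h1 : HasDerivAt (fun v : ℝ => (p - q) * v) (p - q) v := by
      simpa using (hasDerivAt_id v).const_mul (p - q)
    have h2 : HasDerivAt (fun v : ℝ => v ^ 2 / 2) v v := by
      have := (hasDerivAt_pow 2 v).div_const 2
      simpa using this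
    have h3 : HasDerivAt (fun v => Real.log (D v)) (D' v / D v) v :=
      (hD v).log (hDpos v).ne'
    exact (h1.add h2).sub h3
  have hgd2 : ∀ v, HasDerivAt g' (1 - (D v * D v - D' v * D' v) / (D v) ^ 2) v := by
    intro v
    have h1 : HasDerivAt (fun v : ℝ => (p - q) + v) 1 v := by
      exact (hasDerivAt_id v).const_add (p - q)
    have h2 : HasDerivAt (fun v => D' v / D v)
        ((D v * D v - D' v * D' v) / (D v) ^ 2) v :=
      (hD' v).div (hD v) (hDpos v).ne'
    exact h1.sub h2
  have hg'mono : Monotone g' := by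
    apply monotone_of_deriv_nonneg (fun v => (hgd2 v).differentiableAt)
    intro v
    rw [(hgd2 v).deriv]
    have h1 : (D v * D v - D' v * D' v) / (D v) ^ 2 ≤ 1 := by
      rw [div_le_one (pow_pos (hDpos v) 2)]
      nlinarith [sq_nonneg (D' v)]
    linarith
  have hg'0 : g' 0 = 0 := by
    simp [hg'_def, hD_def, hD'_def, hpq]
  have hg'nonneg : ∀ v ∈ Set.Ici (0:ℝ), 0 ≤ g' v := by
    intro v hv
    rw [← hg'0]
    exact hg'mono hv
  have hgdiff : Differentiable ℝ g := fun v => (hg v).differentiableAt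
  have hgmono : MonotoneOn g (Set.Ici 0) := by
    apply monotoneOn_of_deriv_nonneg (convex_Ici 0) hgdiff.continuous.continuousOn
      hgdiff.differentiableOn
    intro x hx
    rw [(hg x).deriv]
    refine hg'nonneg x ?_
    rw [interior_Ici] at hx
    exact le_of_lt (Set.mem_Ioi.mp hx)
  have hg0 : g 0 = 0 := by simp [hg_def, hD_def, hpq]
  have hgu : 0 ≤ g u := by
    rw [← hg0]
    exact hgmono Set.self_mem_Ici hu hu
  have hlog : Real.log (D u) ≤ (p - q) * u + u ^ 2 / 2 := by
    simp only [hg_def] at hgu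
    linarith
  calc p * exp u + q * exp (-u) = D u := rfl
    _ = exp (Real.log (D u)) := (exp_log (hDpos u)).symm
    _ ≤ exp ((p - q) * u + u ^ 2 / 2) := exp_le_exp.2 hlog

lemma chord_bound {l c x : ℝ} (hc : 0 < c) (hx : |x| ≤ c) :
    exp (l * x) ≤ (exp (l * c) + exp (-(l * c))) / 2
      + (exp (l * c) - exp (-(l * c))) / (2 * c) * x := by
  obtain ⟨hx1, hx2⟩ := abs_le.mp hx
  set a : ℝ := (c + x) / (2 * c) with ha_def
  set b : ℝ := (c - x) / (2 * c) with hb_def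
  have ha : 0 ≤ a := by
    apply div_nonneg (by linarith) (by linarith)
  have hb : 0 ≤ b := by
    apply div_nonneg (by linarith) (by linarith)
  have hab : a + b = 1 := by
    rw [ha_def, hb_def, ← add_div, div_eq_one_iff_eq (by positivity)]
    ring
  have hconv := convexOn_exp.2 (Set.mem_univ (l * c)) (Set.mem_univ (-(l * c))) ha hb hab
  simp only [smul_eq_mul] at hconv
  have h1 : a * (l * c) + b * (-(l * c)) = l * x := by
    rw [ha_def, hb_def]
    field_simp
    ring
  rw [h1] at hconv
  refine hconv.trans (le_of_eq ?_)
  rw [ha_def, hb_def]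
  field_simp
  ring

lemma hoeff_affine {l c m α : ℝ} (hc : 0 < c) (hl : 0 ≤ l) (hm : |m| ≤ c) (hma : m ≤ α) :
    (exp (l * c) + exp (-(l * c))) / 2
      + (exp (l * c) - exp (-(l * c))) / (2 * c) * m ≤ exp (l * α + l ^ 2 * c ^ 2 / 2) := by
  obtain ⟨hm1, hm2⟩ := abs_le.mp hm
  have key := hoeffding_scalar (p := (c + m) / (2 * c)) (q := (c - m) / (2 * c))
    (by apply div_nonneg (by linarith) (by linarith))
    (by apply div_nonneg (by linarith) (by linarith))
    (by field_simp; ring) (u := l * c) (by positivity)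
  have h1 : ((c + m) / (2 * c) - (c - m) / (2 * c)) * (l * c) + (l * c) ^ 2 / 2
      = l * m + l ^ 2 * c ^ 2 / 2 := by
    field_simp
    ring
  rw [h1] at key
  have h2 : (c + m) / (2 * c) * exp (l * c) + (c - m) / (2 * c) * exp (-(l * c))
      = (exp (l * c) + exp (-(l * c))) / 2
        + (exp (l * c) - exp (-(l * c))) / (2 * c) * m := by
    field_simp
    ring
  rw [h2] at key
  refine key.trans (exp_le_exp.2 ?_)
  have : l * m ≤ l * α := mul_le_mul_of_nonneg_left hma hl
  linarith


open MeasureTheory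

lemma condexp_exp_le {Ω : Type*} [m0 : MeasurableSpace Ω] (μ : MeasureTheory.Measure Ω)
    [IsProbabilityMeasure μ] {m : MeasurableSpace Ω} (hm : m ≤ m0)
    {Y : Ω → ℝ} (hY : Measurable[m0] Y) {c α l : ℝ} (hl : 0 ≤ l)
    (hb : ∀ᵐ ω ∂μ, |Y ω| ≤ c) (hc : μ[Y|m] ≤ᵐ[μ] fun _ => α) :
    μ[fun ω => exp (l * Y ω)|m] ≤ᵐ[μ] fun _ => exp (l * α + l ^ 2 * c ^ 2 / 2) := by
  have hYint : Integrable Y μ := by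
    refine (integrable_const (μ := μ) c).mono' hY.aestronglyMeasurable ?_
    filter_upwards [hb] with ω hω
    simpa [Real.norm_eq_abs] using hω
  have hc0 : 0 ≤ c := by
    obtain ⟨ω, hω⟩ := hb.exists
    exact (abs_nonneg _).trans hω
  rcases hc0.eq_or_lt with hc0 | hcpos
  · -- c = 0
    have hY0 : Y =ᵐ[μ] fun _ => (0:ℝ) := by
      filter_upwards [hb] with ω hω
      simpa [← hc0, abs_nonpos_iff] using hω
    have hα : 0 ≤ α := by
      have h1 : μ[Y|m] =ᵐ[μ] fun _ => (0:ℝ) := by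
        calc μ[Y|m] =ᵐ[μ] μ[fun _ => (0:ℝ)|m] := condExp_congr_ae hY0
          _ =ᵐ[μ] fun _ => (0:ℝ) := by rw [condExp_const hm]
      obtain ⟨ω, h2, h3⟩ := (h1.and hc).exists
      rw [h2] at h3; exact h3
    have h4 : (fun ω => exp (l * Y ω)) =ᵐ[μ] fun _ => (1:ℝ) := by
      filter_upwards [hY0] with ω hω
      simp [hω]
    calc μ[fun ω => exp (l * Y ω)|m] =ᵐ[μ] μ[fun _ => (1:ℝ)|m] := condExp_congr_ae h4
      _ =ᵐ[μ] fun _ => (1:ℝ) := by rw [condExp_const hm]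
      _ ≤ᵐ[μ] fun _ => exp (l * α + l ^ 2 * c ^ 2 / 2) := by
        refine Filter.Eventually.of_forall fun ω => ?_
        exact Real.one_le_exp (by positivity)
  · -- c > 0
    set A : ℝ := (exp (l * c) + exp (-(l * c))) / 2 with hA_def
    set B : ℝ := (exp (l * c) - exp (-(l * c))) / (2 * c) with hB_def
    have hEint : Integrable (fun ω => exp (l * Y ω)) μ := by
      refine (integrable_const (μ := μ) (exp (l * c))).mono'
        ((hY.const_mul l).exp).aestronglyMeasurable ?_
      filter_upwards [hb] with ω hω
      rw [Real.norm_eq_abs, abs_of_pos (Real.exp_pos _), Real.exp_le_exp]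
      exact mul_le_mul_of_nonneg_left ((abs_le.mp hω).2) hl
    have haff : Integrable (fun ω => A + B * Y ω) μ :=
      (integrable_const A).add (hYint.const_mul B)
    have step1 : μ[fun ω => exp (l * Y ω)|m] ≤ᵐ[μ] μ[fun ω => A + B * Y ω|m] := by
      refine condExp_mono hEint haff ?_
      filter_upwards [hb] with ω hω
      exact chord_bound hcpos hω
    have step2 : μ[fun ω => A + B * Y ω|m] =ᵐ[μ] fun ω => A + B * (μ[Y|m]) ω := by
      have he : (fun ω => A + B * Y ω) = (fun _ => A) + B • Y := by
        funext ω; simp [Pi.add_apply, smul_eq_mul]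
      rw [he]
      calc μ[(fun _ => A) + B • Y|m]
          =ᵐ[μ] μ[fun _ => A|m] + μ[B • Y|m] := condExp_add (integrable_const A) (hYint.smul B) m
        _ =ᵐ[μ] (fun _ => A) + B • μ[Y|m] := by
            refine Filter.EventuallyEq.add ?_ (condExp_smul B Y m)
            rw [condExp_const hm]
        _ = fun ω => A + B * (μ[Y|m]) ω := by
            funext ω; simp [smul_eq_mul]
    have hub : μ[Y|m] ≤ᵐ[μ] fun _ => c := by
      have h1 : μ[Y|m] ≤ᵐ[μ] μ[fun _ => c|m] := by
        refine condExp_mono hYint (integrable_const c) ?_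
        filter_upwards [hb] with ω hω; exact (abs_le.mp hω).2
      refine h1.trans_eq ?_
      rw [condExp_const hm]
    have hlb : (fun _ => -c) ≤ᵐ[μ] μ[Y|m] := by
      have h1 : μ[fun _ => -c|m] ≤ᵐ[μ] μ[Y|m] := by
        refine condExp_mono (integrable_const (-c)) hYint ?_
        filter_upwards [hb] with ω hω; exact (abs_le.mp hω).1
      rw [condExp_const hm] at h1
      exact h1
    refine step1.trans (step2.trans_le ?_)
    filter_upwards [hub, hlb, hc] with ω h1 h2 h3
    exact hoeff_affine hcpos hl (abs_le.mpr ⟨h2, h1⟩) h3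


/-- Azuma–Hoeffding type bound. If `X 1, ..., X (2n)` are bounded random
variables with `|X k| ≤ c k` and the conditional expectation of each `X k` given all the
others is at most `α k`, then for any `t > 0`,
`P(Σ X k ≥ Σ α k + t) ≤ exp (−t² / (2 Σ (c k)²))`. -/
theorem stmt_2 {Ω : Type*} [MeasurableSpace Ω] (μ : Measure Ω) [IsProbabilityMeasure μ]
    (n : ℕ) (X : Fin (2 * n) → Ω → ℝ) (c α : Fin (2 * n) → ℝ)
    (hmeas : ∀ k, Measurable (X k))
    (hbdd : ∀ k, ∀ᵐ ω ∂μ, |X k ω| ≤ c k)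
    (hcond : ∀ k, ∀ᵐ ω ∂μ,
      (μ[X k | ⨆ (j : Fin (2 * n)) (_ : j ≠ k),
          MeasurableSpace.comap (X j) inferInstance]) ω ≤ α k) :
    ∀ t : ℝ, 0 < t →
      (μ {ω | (∑ k, α k) + t ≤ ∑ k, X k ω}).toReal ≤
        Real.exp (-(t ^ 2) / (2 * ∑ k, (c k) ^ 2)) := by
  intro t ht
  classical
  rename_i m0 hPM
  set G : Fin (2 * n) → MeasurableSpace Ω := fun k =>
    ⨆ (j : Fin (2 * n)) (_ : j ≠ k), MeasurableSpace.comap (X j) inferInstance with hG_def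
  have hcondG : ∀ k, μ[X k | G k] ≤ᵐ[μ] fun _ => α k := fun k => hcond k
  have hX_le : ∀ j, MeasurableSpace.comap (X j) inferInstance ≤ m0 :=
    fun j => (hmeas j).comap_le
  have hG_le : ∀ k, G k ≤ m0 := fun k => iSup₂_le fun j _ => hX_le j
  set F : ℕ → MeasurableSpace Ω := fun i =>
    ⨆ (j : Fin (2 * n)) (_ : (j : ℕ) < i),
      MeasurableSpace.comap (X j) inferInstance with hF_def
  have hF_le : ∀ i, F i ≤ m0 := fun i => iSup₂_le fun j _ => hX_le j
  have hFG : ∀ k : Fin (2 * n), F (k : ℕ) ≤ G k := by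
    intro k
    refine iSup₂_le fun j hj => ?_
    exact le_iSup₂ (f := fun (j : Fin (2 * n)) (_ : j ≠ k) =>
      MeasurableSpace.comap (X j) inferInstance) j (Fin.ne_of_val_ne (by omega))
  have hXF : ∀ (i : ℕ) (j : Fin (2 * n)), (j : ℕ) < i → Measurable[F i] (X j) := by
    intro i j hj
    refine Measurable.mono (measurable_iff_comap_le.mpr le_rfl) ?_ le_rfl
    exact le_iSup₂ (f := fun (j : Fin (2 * n)) (_ : (j : ℕ) < i) =>
      MeasurableSpace.comap (X j) inferInstance) j hj
  have hbdd_all : ∀ᵐ ω ∂μ, ∀ j, |X j ω| ≤ c j := ae_all_iff.2 hbdd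
  -- conditional expectation bound wrt the filtration
  have hcondF : ∀ k : Fin (2 * n), μ[X k | F (k : ℕ)] ≤ᵐ[μ] fun _ => α k := by
    intro k
    calc μ[X k | F (k : ℕ)]
        =ᵐ[μ] μ[μ[X k | G k] | F (k : ℕ)] :=
          (condExp_condExp_of_le (hFG k) (hG_le k)).symm
      _ ≤ᵐ[μ] μ[fun _ => α k | F (k : ℕ)] :=
          condExp_mono integrable_condExp (integrable_const _) (hcondG k)
      _ =ᵐ[μ] fun _ => α k := by rw [condExp_const (hF_le _)]
  -- integrability of exponentials of partial sums
  have hSint : ∀ (l : ℝ) (s : Finset (Fin (2 * n))),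
      Integrable (fun ω => exp (l * ∑ j ∈ s, X j ω)) μ := by
    intro l s
    refine (integrable_const (μ := μ) (exp (|l| * ∑ j ∈ s, c j))).mono'
      ((Finset.measurable_sum s fun j _ => hmeas j).const_mul l).exp.aestronglyMeasurable ?_
    filter_upwards [hbdd_all] with ω hω
    rw [Real.norm_eq_abs, abs_of_pos (Real.exp_pos _), Real.exp_le_exp]
    calc l * ∑ j ∈ s, X j ω ≤ |l * ∑ j ∈ s, X j ω| := le_abs_self _
      _ = |l| * |∑ j ∈ s, X j ω| := abs_mul _ _
      _ ≤ |l| * ∑ j ∈ s, |X j ω| :=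
          mul_le_mul_of_nonneg_left (Finset.abs_sum_le_sum_abs _ _) (abs_nonneg l)
      _ ≤ |l| * ∑ j ∈ s, c j := by
          refine mul_le_mul_of_nonneg_left ?_ (abs_nonneg l)
          exact Finset.sum_le_sum fun j _ => hω j
  -- the total variance
  have hV0 : (0:ℝ) ≤ ∑ k, (c k) ^ 2 := Finset.sum_nonneg fun k _ => sq_nonneg _
  rcases hV0.eq_or_lt with hV | hV
  · rw [← hV]
    norm_num
    calc (μ {ω | (∑ k, α k) + t ≤ ∑ k, X k ω}).toReal
        ≤ (μ Set.univ).toReal :=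
          ENNReal.toReal_mono (by simp) (measure_mono (Set.subset_univ _))
      _ = 1 := by simp
  · set V : ℝ := ∑ k, (c k) ^ 2 with hV_def
    set l : ℝ := t / V with hl_def
    have hl : 0 < l := div_pos ht hV
    -- key conditional bound
    have hkey : ∀ k : Fin (2 * n),
        μ[fun ω => exp (l * X k ω) | F (k : ℕ)] ≤ᵐ[μ]
          fun _ => exp (l * α k + l ^ 2 * (c k) ^ 2 / 2) :=
      fun k => condexp_exp_le μ (hF_le _) (hmeas k) hl.le (hbdd k) (hcondF k)
    -- strong measurability of partial exponentials
    have hfSM : ∀ i : ℕ, StronglyMeasurable[F i]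
        (fun ω => exp (l * ∑ j ∈ Finset.univ.filter (fun j : Fin (2 * n) => (j : ℕ) < i), X j ω)) := by
      intro i
      refine Measurable.stronglyMeasurable ?_
      refine Measurable.exp (Measurable.const_mul ?_ l)
      refine Finset.measurable_sum _ fun j hj => ?_
      exact hXF i j (by simpa using (Finset.mem_filter.mp hj).2)
    -- main induction
    have main : ∀ i : ℕ,
        ∫ ω, exp (l * ∑ j ∈ Finset.univ.filter (fun j : Fin (2 * n) => (j : ℕ) < i), X j ω) ∂μ
          ≤ ∏ j ∈ Finset.univ.filter (fun j : Fin (2 * n) => (j : ℕ) < i),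
              exp (l * α j + l ^ 2 * (c j) ^ 2 / 2) := by
      intro i
      induction i with
      | zero => simp
      | succ i ih =>
        by_cases hi : i < 2 * n
        · set k : Fin (2 * n) := ⟨i, hi⟩ with hk_def
          set s : Finset (Fin (2 * n)) :=
            Finset.univ.filter (fun j : Fin (2 * n) => (j : ℕ) < i) with hs_def
          have hset : Finset.univ.filter (fun j : Fin (2 * n) => (j : ℕ) < i + 1)
              = insert k s := by
            ext j
            simp only [hs_def, Finset.mem_filter, Finset.mem_insert, Finset.mem_univ, true_and,
              hk_def, Fin.ext_iff]
            omega
          have hknotmem : k ∉ s := by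
            simp [hs_def, hk_def]
          rw [hset, Finset.prod_insert hknotmem]
          have heq : (fun ω => exp (l * ∑ j ∈ insert k s, X j ω))
              = fun ω => exp (l * ∑ j ∈ s, X j ω) * exp (l * X k ω) := by
            funext ω
            rw [Finset.sum_insert hknotmem, mul_add, Real.exp_add, mul_comm]
          have hint_fg : Integrable
              (fun ω => exp (l * ∑ j ∈ s, X j ω) * exp (l * X k ω)) μ := by
            rw [← heq]; exact hSint l _
          have hint_g : Integrable (fun ω => exp (l * X k ω)) μ := by
            have := hSint l {k}
            simpa using this
          have hpull : μ[fun ω => exp (l * ∑ j ∈ s, X j ω) * exp (l * X k ω) | F i]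
              =ᵐ[μ] fun ω => exp (l * ∑ j ∈ s, X j ω) *
                (μ[fun ω => exp (l * X k ω) | F i]) ω := by
            exact condExp_mul_of_stronglyMeasurable_left (hfSM i) hint_fg hint_g
          have hint_fcond : Integrable
              (fun ω => exp (l * ∑ j ∈ s, X j ω) *
                (μ[fun ω => exp (l * X k ω) | F i]) ω) μ :=
            integrable_condExp.congr hpull
          calc ∫ ω, exp (l * ∑ j ∈ insert k s, X j ω) ∂μ
              = ∫ ω, exp (l * ∑ j ∈ s, X j ω) * exp (l * X k ω) ∂μ := by rw [heq]
            _ = ∫ ω, (μ[fun ω => exp (l * ∑ j ∈ s, X j ω) * exp (l * X k ω) | F i]) ω ∂μ :=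
                (integral_condExp (hF_le i)).symm
            _ = ∫ ω, exp (l * ∑ j ∈ s, X j ω) *
                  (μ[fun ω => exp (l * X k ω) | F i]) ω ∂μ :=
                integral_congr_ae hpull
            _ ≤ ∫ ω, exp (l * ∑ j ∈ s, X j ω) *
                  exp (l * α k + l ^ 2 * (c k) ^ 2 / 2) ∂μ := by
                refine integral_mono_ae hint_fcond ((hSint l s).mul_const _) ?_
                filter_upwards [hkey k] with ω hω
                exact mul_le_mul_of_nonneg_left hω (Real.exp_pos _).le
            _ = exp (l * α k + l ^ 2 * (c k) ^ 2 / 2) *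
                  ∫ ω, exp (l * ∑ j ∈ s, X j ω) ∂μ := by
                rw [integral_mul_const]; ring
            _ ≤ exp (l * α k + l ^ 2 * (c k) ^ 2 / 2) *
                  ∏ j ∈ s, exp (l * α j + l ^ 2 * (c j) ^ 2 / 2) :=
                mul_le_mul_of_nonneg_left ih (Real.exp_pos _).le
        · have hset : Finset.univ.filter (fun j : Fin (2 * n) => (j : ℕ) < i + 1)
              = Finset.univ.filter (fun j : Fin (2 * n) => (j : ℕ) < i) := by
            ext j
            have := j.isLt
            simp only [Finset.mem_filter, Finset.mem_univ, true_and]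
            omega
          rw [hset]
          exact ih
    -- Chernoff bound
    have hch := ProbabilityTheory.measure_ge_le_exp_mul_mgf (μ := μ)
      (X := fun ω => ∑ k, X k ω) (t := l) ((∑ k, α k) + t) hl.le (hSint l Finset.univ)
    have huniv : Finset.univ.filter (fun j : Fin (2 * n) => (j : ℕ) < 2 * n)
        = (Finset.univ : Finset (Fin (2 * n))) := by
      ext j
      simp [j.isLt]
    have hmain := main (2 * n)
    rw [huniv] at hmain
    have hmgf : ProbabilityTheory.mgf (fun ω => ∑ k, X k ω) μ l
        = ∫ ω, exp (l * ∑ k, X k ω) ∂μ := rfl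
    refine hch.trans ?_
    rw [hmgf]
    calc exp (-l * ((∑ k, α k) + t)) * ∫ ω, exp (l * ∑ k, X k ω) ∂μ
        ≤ exp (-l * ((∑ k, α k) + t)) *
            ∏ j, exp (l * α j + l ^ 2 * (c j) ^ 2 / 2) :=
          mul_le_mul_of_nonneg_left hmain (Real.exp_pos _).le
      _ = exp (-(t ^ 2) / (2 * V)) := by
          rw [← Real.exp_sum, ← Real.exp_add]
          congr 1
          rw [Finset.sum_add_distrib, ← Finset.mul_sum, ← Finset.sum_div, ← Finset.mul_sum,
            ← hV_def]
          rw [hl_def]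
          field_simp
          ring
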